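/- Let z₀ = (p, 0) ∈ ℝ^{2n} with p ∈ ℝⁿ. Then for every t ∈ ℝ, (exp(t·Ω·ℍ)·z₀)ᵀ · Ω · (Ω·ℍ·exp(t·Ω·ℍ)·z₀) = −pᵀ·B·Bᵀ·p, and in particular this quantity is ≤ 0 and independent of t (the Jacobi curve t ↦ exp(t·Ω·ℍ)·𝒱 is monotone). -/

import Mathlib

open Matrix

/-- The standard symplectic matrix `Ω = [[0, I],[−I, 0]]` on `ℝ^{2n}`. -/
noncomputable def Omega (n : ℕ) : Matrix (Fin n ⊕ Fin n) (Fin n ⊕ Fin n) ℝ :=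
  Matrix.fromBlocks 0 1 (-1) 0

/-- The Hamiltonian matrix `ℍ = [[B Bᵀ, A],[Aᵀ, Q]]` of the LQ problem. -/
noncomputable def HMat {n k : ℕ} (A Q : Matrix (Fin n) (Fin n) ℝ)
    (B : Matrix (Fin n) (Fin k) ℝ) : Matrix (Fin n ⊕ Fin n) (Fin n ⊕ Fin n) ℝ :=
  Matrix.fromBlocks (B * Bᵀ) A Aᵀ Q

lemma quad_form_conj {m : Type*} [Fintype m] [DecidableEq m]
    (X E : Matrix m m ℝ) (v : m → ℝ) :
    (E *ᵥ v) ⬝ᵥ (X *ᵥ (E *ᵥ v)) = v ⬝ᵥ ((Eᵀ * X * E) *ᵥ v) := by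
  conv_rhs => rw [Matrix.mul_assoc, ← Matrix.mulVec_mulVec, Matrix.dotProduct_mulVec,
    Matrix.vecMul_transpose, ← Matrix.mulVec_mulVec]

theorem jacobi_curve_monotone {n k : ℕ} (hn : 1 ≤ n) (hk : 1 ≤ k)
    (A Q : Matrix (Fin n) (Fin n) ℝ) (hQ : Q.IsSymm) (B : Matrix (Fin n) (Fin k) ℝ)
    (p : Fin n → ℝ) (z₀ : Fin n ⊕ Fin n → ℝ) (hz₀ : z₀ = Sum.elim p 0) :
    ∀ t : ℝ,
      ((NormedSpace.exp (t • (Omega n * HMat A Q B))).mulVec z₀) ⬝ᵥ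
        ((Omega n).mulVec ((Omega n * HMat A Q B).mulVec
          ((NormedSpace.exp (t • (Omega n * HMat A Q B))).mulVec z₀)))
        = -(p ⬝ᵥ ((B * Bᵀ).mulVec p)) ∧
      ((NormedSpace.exp (t • (Omega n * HMat A Q B))).mulVec z₀) ⬝ᵥ
        ((Omega n).mulVec ((Omega n * HMat A Q B).mulVec
          ((NormedSpace.exp (t • (Omega n * HMat A Q B))).mulVec z₀))) ≤ 0 := by
  intro t
  set J := Omega n with hJ
  set H := HMat A Q B with hH
  set M := J * H with hM
  set E := NormedSpace.exp (t • M) with hE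
  -- basic identities
  have hJJ : J * J = -1 := by
    simp [hJ, Omega, Matrix.fromBlocks_multiply]
    ext (i | i) (j | j) <;>
      simp [Matrix.fromBlocks, Matrix.one_apply, Matrix.neg_apply]
  have hHsymm : Hᵀ = H := by
    simp [hH, HMat, Matrix.fromBlocks_transpose, Matrix.transpose_mul, hQ.eq]
  have hJT : Jᵀ = -J := by
    simp [hJ, Omega, Matrix.fromBlocks_transpose]
    ext (i | i) (j | j) <;>
      simp [Matrix.fromBlocks, Matrix.neg_apply]
  have hMT : Mᵀ = J * M * J := by
    rw [hM, Matrix.transpose_mul, hHsymm, hJT, ← Matrix.mul_assoc, hJJ]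
    simp
  -- J as a unit
  have hJinv : J * (-J) = 1 := by rw [Matrix.mul_neg, hJJ]; simp
  have hJinv' : (-J) * J = 1 := by rw [Matrix.neg_mul, hJJ]; simp
  let U : (Matrix (Fin n ⊕ Fin n) (Fin n ⊕ Fin n) ℝ)ˣ := ⟨J, -J, hJinv, hJinv'⟩
  -- transpose of the exponential
  have hET : Eᵀ = J * NormedSpace.exp (-(t • M)) * (-J) := by
    have h1 : (t • M)ᵀ = (↑U : Matrix _ _ ℝ) * (-(t • M)) * (↑U⁻¹ : Matrix _ _ ℝ) := by
      show (t • M)ᵀ = J * (-(t • M)) * (-J)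
      rw [Matrix.transpose_smul, hMT]
      simp only [Matrix.mul_neg, Matrix.neg_mul, neg_neg, Matrix.mul_smul, Matrix.smul_mul]
    rw [hE, ← Matrix.exp_transpose, h1, Matrix.exp_units_conj]
    rfl
  -- the quadratic form is preserved
  have hcomm : Commute (-(t • M)) (t • M) := (Commute.refl (t • M)).neg_left
  have hinv : NormedSpace.exp (-(t • M)) * E = 1 := by
    rw [hE, ← Matrix.exp_add_of_commute _ _ hcomm, neg_add_cancel, NormedSpace.exp_zero]
  have hMcomm : M * E = E * M := by
    have : Commute (t • M) M := (Commute.refl M).smul_left t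
    simpa [hE] using this.exp_left.symm.eq
  have hconj : Eᵀ * (J * M) * E = J * M := by
    rw [hET]
    calc J * NormedSpace.exp (-(t • M)) * (-J) * (J * M) * E
        = J * NormedSpace.exp (-(t • M)) * ((-J) * J) * M * E := by
          simp [Matrix.mul_assoc]
      _ = J * (NormedSpace.exp (-(t • M)) * (M * E)) := by
          rw [hJinv']
          simp [Matrix.mul_assoc]
      _ = J * (NormedSpace.exp (-(t • M)) * E * M) := by rw [hMcomm, Matrix.mul_assoc]
      _ = J * M := by rw [hinv, Matrix.one_mul]
  have hJM : J * M = -H := by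
    rw [hM, ← Matrix.mul_assoc, hJJ]; simp
  -- compute the value
  have hval : (E *ᵥ z₀) ⬝ᵥ (J *ᵥ (M *ᵥ (E *ᵥ z₀))) = -(p ⬝ᵥ ((B * Bᵀ) *ᵥ p)) := by
    rw [Matrix.mulVec_mulVec, quad_form_conj, hconj, hJM, hz₀, hH, HMat]
    rw [Matrix.neg_mulVec, dotProduct_neg, Matrix.fromBlocks_mulVec]
    simp [sumElim_dotProduct_sumElim]
  have hnonneg : 0 ≤ p ⬝ᵥ ((B * Bᵀ) *ᵥ p) := by
    rw [← Matrix.mulVec_mulVec, Matrix.dotProduct_mulVec, ← Matrix.mulVec_transpose]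
    exact Finset.sum_nonneg fun i _ => mul_self_nonneg _
  exact ⟨hval, hval ▸ neg_nonpos_of_nonneg hnonneg⟩
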